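/- For every β > 0 and every integer m ≥ 1, ∫_{(1−√β)²}^{(1+√β)²} x^m · √(4β−(x−1−β)²)/(2πx) dx = (1/m) Σ_{i=1}^{m} binom(m,i)·binom(m,i−1)·β^i. Equivalently, the m-th moment of the Marčenko–Pastur measure μ_β equals (1/m) Σ_{i=1}^{m} binom(m,i)·binom(m,i−1)·β^i for every m ≥ 1. -/

import Mathlib

open intervalIntegral Real Finset
set_option maxHeartbeats 1000000

noncomputable def aa (n k : ℕ) (s : ℝ) : ℂ := (n.choose k : ℂ) * (s:ℂ)^k

noncomputable def F (n k l : ℕ) (s θ : ℝ) : ℂ :=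
  (aa n k s * aa n l s) *
          ((2 * Complex.exp ((((k:ℤ) - l : ℤ):ℂ) * θ * Complex.I)
            - Complex.exp ((((k:ℤ) - l + 2 : ℤ):ℂ) * θ * Complex.I)
            - Complex.exp ((((k:ℤ) - l - 2 : ℤ):ℂ) * θ * Complex.I)) / 4)

noncomputable def G (n k l : ℕ) (s : ℝ) : ℂ :=
  (aa n k s * aa n l s) *
          ((2 * (if ((k:ℤ) - l : ℤ) = 0 then (2*Real.pi:ℂ) else 0)
            - (if ((k:ℤ) - l + 2 : ℤ) = 0 then (2*Real.pi:ℂ) else 0)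
            - (if ((k:ℤ) - l - 2 : ℤ) = 0 then (2*Real.pi:ℂ) else 0)) / 4)

lemma exp_integrable (d : ℤ) : IntervalIntegrable
    (fun θ:ℝ => Complex.exp ((d:ℂ)*θ*Complex.I)) MeasureTheory.volume 0 (2*Real.pi) := by
  apply Continuous.intervalIntegrable; fun_prop

lemma int_exp_circle (d : ℤ) :
    ∫ θ in (0:ℝ)..(2*Real.pi), Complex.exp ((d:ℂ) * θ * Complex.I) =
      if d = 0 then (2*Real.pi : ℂ) else 0 := by
  rcases eq_or_ne d 0 with h | h
  · simp [h]
  · rw [if_neg h]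
    have hc : (d:ℂ) * Complex.I ≠ 0 := by
      simp [Complex.ext_iff, h]
    have h2 := integral_exp_mul_complex (a := 0) (b := 2*Real.pi) hc
    have he : ∀ θ:ℝ, (d:ℂ) * θ * Complex.I = ((d:ℂ) * Complex.I) * (θ:ℝ) := fun θ => by ring
    simp_rw [he]
    rw [h2]
    have : Complex.exp ((d:ℂ)*Complex.I * ((2*Real.pi : ℝ):ℂ)) = 1 := by
      rw [show (d:ℂ)*Complex.I * ((2*Real.pi : ℝ):ℂ) = (d:ℂ) * (2*(Real.pi:ℂ)*Complex.I) by push_cast; ring]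
      exact Complex.exp_int_mul_two_pi_mul_I d
    push_cast at this
    simp [this]

lemma pointwise_expand (n : ℕ) (s θ : ℝ) :
    (((1 + s^2 + 2*s*Real.cos θ : ℝ) ^ n * (Real.sin θ)^2 : ℝ) : ℂ)
      = ∑ k ∈ range (n+1), ∑ l ∈ range (n+1), F n k l s θ := by
  unfold F
  set A := Complex.exp ((θ:ℂ) * Complex.I) with hA
  have hAne : A ≠ 0 := Complex.exp_ne_zero _
  have e1 : ∀ k : ℕ, Complex.exp ((k:ℂ)*((θ:ℂ)*Complex.I)) = A^k := by
    intro k; rw [Complex.exp_nat_mul]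
  have e1' : ∀ k : ℕ, Complex.exp (-((k:ℂ)*((θ:ℂ)*Complex.I))) = (A⁻¹)^k := by
    intro k; rw [Complex.exp_neg, e1, inv_pow]
  have hE1 : ∀ k l : ℕ, Complex.exp (((k:ℂ) - l) * θ * Complex.I) = A^k * (A⁻¹)^l := by
    intro k l
    rw [show ((k:ℂ) - l) * θ * Complex.I = (k:ℂ)*((θ:ℂ)*Complex.I) + -((l:ℂ)*((θ:ℂ)*Complex.I)) by ring,
      Complex.exp_add, e1, e1']
  have hE2 : ∀ k l : ℕ, Complex.exp (((k:ℂ) - l + 2) * θ * Complex.I) = A^k * (A⁻¹)^l * A^2 := by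
    intro k l
    rw [show ((k:ℂ) - l + 2) * θ * Complex.I
        = ((k:ℂ)*((θ:ℂ)*Complex.I) + -((l:ℂ)*((θ:ℂ)*Complex.I))) + (2:ℕ)*((θ:ℂ)*Complex.I) by push_cast; ring,
      Complex.exp_add, Complex.exp_add, e1, e1', e1]
  have hE3 : ∀ k l : ℕ, Complex.exp (((k:ℂ) - l - 2) * θ * Complex.I) = A^k * (A⁻¹)^l * (A⁻¹)^2 := by
    intro k l
    rw [show ((k:ℂ) - l - 2) * θ * Complex.I
        = ((k:ℂ)*((θ:ℂ)*Complex.I) + -((l:ℂ)*((θ:ℂ)*Complex.I))) + -((2:ℕ)*((θ:ℂ)*Complex.I)) by push_cast; ring,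
      Complex.exp_add, Complex.exp_add, e1, e1', e1']
  have hcos : Complex.cos (θ:ℂ) = (A + A⁻¹) / 2 := by
    rw [Complex.cos, hA, ← Complex.exp_neg]
    ring_nf
  have hsin : Complex.sin (θ:ℂ) = (A⁻¹ - A) * Complex.I / 2 := by
    rw [Complex.sin, hA, ← Complex.exp_neg]
    ring_nf
  have key : (1 + (s:ℂ)^2 + 2*(s:ℂ)*Complex.cos (θ:ℂ)) = (1 + s*A) * (1 + s*A⁻¹) := by
    rw [hcos]
    field_simp
    ring
  have hpow : ∀ x : ℂ, (1 + (s:ℂ)*x)^n = ∑ k ∈ range (n+1), (n.choose k : ℂ) * (s:ℂ)^k * x^k := by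
    intro x
    rw [add_comm, add_pow]
    refine Finset.sum_congr rfl fun k _ => by ring
  push_cast
  rw [key, mul_pow, hpow A, hpow A⁻¹, sum_mul_sum]
  rw [Finset.sum_mul]
  refine Finset.sum_congr rfl fun k hk => ?_
  rw [Finset.sum_mul]
  refine Finset.sum_congr rfl fun l hl => ?_
  rw [hE1, hE2, hE3, hsin]
  simp only [aa]
  have hAB : A * A⁻¹ = 1 := mul_inv_cancel₀ hAne
  have hI : Complex.I^2 = -1 := Complex.I_sq
  linear_combination ((n.choose k:ℂ)*(n.choose l:ℂ)*(s:ℂ)^k*(s:ℂ)^l*A^k*(A⁻¹)^l) * ((A⁻¹ - A)^2/4) * hI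
    + ((n.choose k:ℂ)*(n.choose l:ℂ)*(s:ℂ)^k*(s:ℂ)^l*A^k*(A⁻¹)^l) / 2 * hAB

lemma per_term (n k l : ℕ) (s : ℝ) :
    (∫ θ in (0:ℝ)..(2*Real.pi), F n k l s θ) = G n k l s := by
  unfold F G
  rw [intervalIntegral.integral_const_mul, intervalIntegral.integral_div,
    intervalIntegral.integral_sub, intervalIntegral.integral_sub,
    intervalIntegral.integral_const_mul, int_exp_circle, int_exp_circle, int_exp_circle]
  · exact (exp_integrable _).const_mul 2
  · exact exp_integrable _
  · exact ((exp_integrable _).const_mul 2).sub (exp_integrable _)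
  · exact exp_integrable _

lemma term_integrable (n k l : ℕ) (s : ℝ) : IntervalIntegrable
    (fun θ:ℝ => F n k l s θ) MeasureTheory.volume 0 (2*Real.pi) := by
  unfold F
  apply Continuous.intervalIntegrable; fun_prop

lemma wallis (n : ℕ) (s : ℝ) :
    (∫ θ in (0:ℝ)..(2*Real.pi), (1 + s^2 + 2*s*Real.cos θ)^n * (Real.sin θ)^2)
    = Real.pi * (∑ k ∈ range (n+1), (n.choose k:ℝ)^2 * (s^2)^k)
      - Real.pi * (∑ k ∈ range (n+1), ((n.choose k:ℝ) * (n.choose (k+2):ℝ)) * ((s^2)^(k+1))) := by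
  apply Complex.ofReal_injective
  rw [← intervalIntegral.integral_ofReal]
  simp_rw [pointwise_expand n s]
  rw [intervalIntegral.integral_finset_sum
    (f := fun k (θ:ℝ) => ∑ l ∈ range (n+1), F n k l s θ)
    (fun k _ => by
      apply Continuous.intervalIntegrable
      exact continuous_finset_sum _ (fun l _ => by unfold F; fun_prop))]
  have step : ∀ k ∈ range (n+1),
      (∫ θ in (0:ℝ)..(2*Real.pi), ∑ l ∈ range (n+1), F n k l s θ)
        = ∑ l ∈ range (n+1), G n k l s := by
    intro k _
    rw [intervalIntegral.integral_finset_sum (fun l _ => term_integrable n k l s)]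
    exact Finset.sum_congr rfl fun l _ => per_term n k l s
  rw [Finset.sum_congr rfl step]
  have hG : ∀ k l : ℕ, G n k l s =
      (if l = k then aa n k s * aa n l s * (Real.pi:ℂ) else 0)
      - (if l = k + 2 then aa n k s * aa n l s * ((Real.pi:ℂ)/2) else 0)
      - (if k = l + 2 then aa n k s * aa n l s * ((Real.pi:ℂ)/2) else 0) := by
    intro k l
    unfold G
    have c1 : (((k:ℤ) - l = 0)) ↔ l = k := by omega
    have c2 : (((k:ℤ) - l + 2 = 0)) ↔ l = k + 2 := by omega
    have c3 : (((k:ℤ) - l - 2 = 0)) ↔ k = l + 2 := by omega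
    simp only [c1, c2, c3]
    split_ifs <;> first | omega | ring
  simp_rw [hG, Finset.sum_sub_distrib]
  have T1 : ∑ k ∈ range (n+1), ∑ l ∈ range (n+1),
      (if l = k then aa n k s * aa n l s * (Real.pi:ℂ) else 0)
      = ∑ k ∈ range (n+1), aa n k s * aa n k s * (Real.pi:ℂ) := by
    refine Finset.sum_congr rfl fun k hk => ?_
    rw [Finset.sum_ite_eq' (range (n+1)) k (fun l => aa n k s * aa n l s * (Real.pi:ℂ)), if_pos hk]
  have T2 : ∀ k : ℕ, ∑ l ∈ range (n+1),
      (if l = k + 2 then aa n k s * aa n l s * ((Real.pi:ℂ)/2) else 0)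
      = aa n k s * aa n (k+2) s * ((Real.pi:ℂ)/2) := by
    intro k
    rw [Finset.sum_ite_eq' (range (n+1)) (k+2) (fun l => aa n k s * aa n l s * ((Real.pi:ℂ)/2))]
    by_cases h : k + 2 ∈ range (n+1)
    · rw [if_pos h]
    · rw [if_neg h]
      have hz : n.choose (k+2) = 0 := Nat.choose_eq_zero_of_lt (by simp at h; omega)
      simp [aa, hz]
  have T3 : ∑ k ∈ range (n+1), ∑ l ∈ range (n+1),
      (if k = l + 2 then aa n k s * aa n l s * ((Real.pi:ℂ)/2) else 0)
      = ∑ k ∈ range (n+1), aa n k s * aa n (k+2) s * ((Real.pi:ℂ)/2) := by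
    rw [Finset.sum_comm]
    refine Finset.sum_congr rfl fun l _ => ?_
    rw [Finset.sum_ite_eq' (range (n+1)) (l+2) (fun k => aa n k s * aa n l s * ((Real.pi:ℂ)/2))]
    by_cases h : l + 2 ∈ range (n+1)
    · rw [if_pos h]; ring
    · rw [if_neg h]
      have hz : n.choose (l+2) = 0 := Nat.choose_eq_zero_of_lt (by simp at h; omega)
      simp [aa, hz]
  rw [T1, T3, Finset.sum_congr rfl (fun k _ => T2 k)]
  have hA : ∑ k ∈ range (n+1), aa n k s * aa n k s * (Real.pi:ℂ)
      = ((Real.pi * ∑ k ∈ range (n+1), (n.choose k:ℝ)^2 * (s^2)^k : ℝ) : ℂ) := by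
    push_cast [aa]
    rw [Finset.mul_sum]
    exact Finset.sum_congr rfl fun k _ => by ring
  have hD : ((Real.pi * ∑ k ∈ range (n+1), ((n.choose k:ℝ) * (n.choose (k+2):ℝ)) * ((s^2)^(k+1)) : ℝ) : ℂ)
      = (∑ k ∈ range (n+1), aa n k s * aa n (k+2) s * ((Real.pi:ℂ)/2))
        + (∑ k ∈ range (n+1), aa n k s * aa n (k+2) s * ((Real.pi:ℂ)/2)) := by
    rw [← Finset.sum_add_distrib]
    push_cast [aa]
    rw [Finset.mul_sum]
    exact Finset.sum_congr rfl fun k _ => by ring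
  push_cast at hA hD ⊢
  rw [hA]
  linear_combination hD

lemma subst_lemma (n : ℕ) (s : ℝ) (hs : 0 < s) :
    ∫ x in ((1-s)^2)..((1+s)^2), x^n * Real.sqrt (4*s^2 - (x - 1 - s^2)^2)
      = ∫ θ in (0:ℝ)..Real.pi, (1+s^2+2*s*Real.cos θ)^n * (4*s^2*(Real.sin θ)^2) := by
  have hg : Continuous (fun x : ℝ => x^n * Real.sqrt (4*s^2 - (x - 1 - s^2)^2)) := by
    apply Continuous.mul (continuous_pow n)
    exact Real.continuous_sqrt.comp (by fun_prop)
  have hd : ∀ θ ∈ Set.uIcc (0:ℝ) Real.pi,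
      HasDerivAt (fun θ : ℝ => 1+s^2+2*s*Real.cos θ) (2*s*(-Real.sin θ)) θ := by
    intro θ _
    exact ((Real.hasDerivAt_cos θ).const_mul (2*s)).const_add (1+s^2)
  have hf' : ContinuousOn (fun θ : ℝ => 2*s*(-Real.sin θ)) (Set.uIcc 0 Real.pi) := by fun_prop
  have key := intervalIntegral.integral_comp_smul_deriv hd hf' hg
  have e0 : (1:ℝ)+s^2+2*s*Real.cos 0 = (1+s)^2 := by simp; ring
  have epi : (1:ℝ)+s^2+2*s*Real.cos Real.pi = (1-s)^2 := by simp; ring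
  rw [e0, epi] at key
  have congr1 : ∫ θ in (0:ℝ)..Real.pi, (2*s*(-Real.sin θ)) •
      ((fun x : ℝ => x^n * Real.sqrt (4*s^2 - (x - 1 - s^2)^2)) ∘ (fun θ : ℝ => 1+s^2+2*s*Real.cos θ)) θ
      = ∫ θ in (0:ℝ)..Real.pi, -((1+s^2+2*s*Real.cos θ)^n * (4*s^2*(Real.sin θ)^2)) := by
    apply intervalIntegral.integral_congr
    intro θ hθ
    rw [Set.uIcc_of_le Real.pi_nonneg] at hθ
    have hsin : 0 ≤ Real.sin θ := Real.sin_nonneg_of_nonneg_of_le_pi hθ.1 hθ.2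
    simp only [Function.comp, smul_eq_mul]
    have harg : 4*s^2 - ((1+s^2+2*s*Real.cos θ) - 1 - s^2)^2 = (2*s*Real.sin θ)^2 := by
      have := Real.sin_sq_add_cos_sq θ
      nlinarith [this]
    rw [harg, Real.sqrt_sq (by positivity)]
    ring
  rw [congr1] at key
  rw [intervalIntegral.integral_neg] at key
  rw [intervalIntegral.integral_symm ((1-s)^2) ((1+s)^2)] at key
  linarith [key]

lemma symm_lemma (n : ℕ) (s : ℝ) :
    (∫ θ in (0:ℝ)..(2*Real.pi), (1+s^2+2*s*Real.cos θ)^n * (Real.sin θ)^2)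
      = 2 * ∫ θ in (0:ℝ)..Real.pi, (1+s^2+2*s*Real.cos θ)^n * (Real.sin θ)^2 := by
  have hcont : Continuous (fun θ : ℝ => (1+s^2+2*s*Real.cos θ)^n * (Real.sin θ)^2) := by fun_prop
  have hsplit := intervalIntegral.integral_add_adjacent_intervals
    (a := (0:ℝ)) (b := Real.pi) (c := 2*Real.pi) (μ := MeasureTheory.volume)
    (hcont.intervalIntegrable 0 Real.pi) (hcont.intervalIntegrable Real.pi (2*Real.pi))
  have hrefl : (∫ θ in Real.pi..(2*Real.pi), (1+s^2+2*s*Real.cos θ)^n * (Real.sin θ)^2)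
      = ∫ θ in (0:ℝ)..Real.pi, (1+s^2+2*s*Real.cos θ)^n * (Real.sin θ)^2 := by
    have h := intervalIntegral.integral_comp_sub_left
      (a := (0:ℝ)) (b := Real.pi)
      (fun θ : ℝ => (1+s^2+2*s*Real.cos θ)^n * (Real.sin θ)^2) (2*Real.pi)
    rw [show 2*Real.pi - Real.pi = Real.pi by ring, show 2*Real.pi - 0 = 2*Real.pi by ring] at h
    rw [← h]
    apply intervalIntegral.integral_congr
    intro θ _
    simp [Real.cos_two_pi_sub, Real.sin_two_pi_sub]
  linarith [hsplit, hrefl]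

lemma narayana_id (n t : ℕ) (ht : t + 1 ≤ n) :
    ((n:ℝ)+1) * ((n.choose (t+1):ℝ)^2 - (n.choose t : ℝ) * (n.choose (t+2):ℝ))
      = ((n+1).choose (t+2) : ℝ) * ((n+1).choose (t+1) : ℝ) := by
  have h1n := Nat.add_one_mul_choose_eq n (t+1)
  have h2n := Nat.add_one_mul_choose_eq n t
  have h5n := Nat.choose_succ_right_eq (n+1) (t+1)
  have h1 : ((t:ℝ)+2) * ((n+1).choose (t+2) : ℝ) = ((n:ℝ)+1) * (n.choose (t+1) : ℝ) := by
    have := congrArg (Nat.cast : ℕ → ℝ) h1n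
    push_cast at this
    linarith
  have h2 : ((t:ℝ)+1) * ((n+1).choose (t+1) : ℝ) = ((n:ℝ)+1) * (n.choose t : ℝ) := by
    have := congrArg (Nat.cast : ℕ → ℝ) h2n
    push_cast at this
    linarith
  have h3 : ((n+1).choose (t+2) : ℝ) = (n.choose (t+1) : ℝ) + (n.choose (t+2) : ℝ) := by
    have := congrArg (Nat.cast : ℕ → ℝ) (Nat.choose_succ_succ n (t+1))
    push_cast at this
    linarith
  have h4 : ((n+1).choose (t+1) : ℝ) = (n.choose t : ℝ) + (n.choose (t+1) : ℝ) := by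
    have := congrArg (Nat.cast : ℕ → ℝ) (Nat.choose_succ_succ n t)
    push_cast at this
    linarith
  have h5 : ((n+1).choose (t+2) : ℝ) * ((t:ℝ)+2) = ((n+1).choose (t+1) : ℝ) * ((n:ℝ) - t) := by
    have := congrArg (Nat.cast : ℕ → ℝ) h5n
    rw [show ((n+1:ℕ) - (t+1:ℕ) : ℕ) = (n - t : ℕ) by omega] at this
    push_cast [Nat.cast_sub (by omega : t ≤ n)] at this
    linarith
  linear_combination (-(n.choose (t+1):ℝ)) * h1 + (((n+1).choose (t+2):ℝ) - (n.choose (t+1):ℝ) + ((n+1).choose (t+1):ℝ)) * h2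
    + (((n:ℝ)+1) * (n.choose t:ℝ)) * h3 - (((t:ℝ)+2) * ((n+1).choose (t+2):ℝ) + ((t:ℝ)+1) * ((n+1).choose (t+1):ℝ)) * h4
    - (n.choose t : ℝ) * h5

lemma sum_transform (n : ℕ) (β : ℝ) :
    β * ((∑ k ∈ range (n+1), (n.choose k:ℝ)^2 * β^k)
       - (∑ k ∈ range (n+1), ((n.choose k:ℝ)*(n.choose (k+2):ℝ)) * β^(k+1)))
    = (1/((n:ℝ)+1)) * ∑ i ∈ Finset.Icc 1 (n+1),
        ((n+1).choose i:ℝ) * ((n+1).choose (i-1):ℝ) * β^i := by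
  have hRHS : ∑ i ∈ Finset.Icc 1 (n+1), ((n+1).choose i:ℝ) * ((n+1).choose (i-1):ℝ) * β^i
      = ∑ j ∈ range (n+1), ((n+1).choose (j+1):ℝ) * ((n+1).choose j:ℝ) * β^(j+1) := by
    rw [show Finset.Icc 1 (n+1) = Finset.Ico 1 (n+2) by rw [← Finset.Ico_add_one_right_eq_Icc]; rfl, Finset.sum_Ico_eq_sum_range]
    simp only [show n + 2 - 1 = n + 1 by omega]
    refine Finset.sum_congr rfl fun j _ => ?_
    simp [add_comm 1 j]
  have hD : ∑ k ∈ range (n+1), ((n.choose k:ℝ)*(n.choose (k+2):ℝ)) * β^(k+2)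
      = ∑ j ∈ range (n+1), (if j = 0 then 0 else (n.choose (j-1):ℝ)*(n.choose (j+1):ℝ) * β^(j+1)) := by
    rw [Finset.sum_range_succ, Finset.sum_range_succ' (fun j => if j = 0 then (0:ℝ) else (n.choose (j-1):ℝ)*(n.choose (j+1):ℝ) * β^(j+1)) n]
    simp [Nat.choose_eq_zero_of_lt (show n < n+2 by omega)]
  have hL1 : β * (∑ k ∈ range (n+1), (n.choose k:ℝ)^2 * β^k)
      = ∑ j ∈ range (n+1), (n.choose j:ℝ)^2 * β^(j+1) := by
    rw [Finset.mul_sum]; exact Finset.sum_congr rfl fun j _ => by ring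
  have hL2 : β * (∑ k ∈ range (n+1), ((n.choose k:ℝ)*(n.choose (k+2):ℝ)) * β^(k+1))
      = ∑ k ∈ range (n+1), ((n.choose k:ℝ)*(n.choose (k+2):ℝ)) * β^(k+2) := by
    rw [Finset.mul_sum]; exact Finset.sum_congr rfl fun j _ => by ring
  rw [mul_sub, hL1, hL2, hD, hRHS, ← Finset.sum_sub_distrib, Finset.mul_sum]
  refine Finset.sum_congr rfl fun j hj => ?_
  rcases j with _ | t
  · field_simp
    simp [mul_comm]
  · rw [if_neg (Nat.succ_ne_zero t)]
    have ht : t + 1 ≤ n := by simpa using Nat.lt_succ_iff.mp (Finset.mem_range.mp hj)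
    have key := narayana_id n t ht
    have hne : ((n:ℝ)+1) ≠ 0 := by positivity
    simp only [Nat.succ_sub_one, Nat.add_sub_cancel]
    field_simp
    linear_combination β^(t+2) * key

/-- **Moments of the Marčenko–Pastur law.** For every `β > 0` and integer `m ≥ 1`, the `m`-th
moment of the Marčenko–Pastur measure `μ_β` equals
`(1/m) Σ_{i=1}^{m} binom(m,i)·binom(m,i−1)·β^i`. -/
theorem marchenko_pastur_moments (β : ℝ) (hβ : 0 < β) (m : ℕ) (hm : 1 ≤ m) :
    (∫ x in ((1 - Real.sqrt β) ^ 2)..((1 + Real.sqrt β) ^ 2),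
        x ^ m * (Real.sqrt (4 * β - (x - 1 - β) ^ 2) / (2 * Real.pi * x)))
      = (1 / (m : ℝ)) * ∑ i ∈ Finset.Icc 1 m,
          (Nat.choose m i : ℝ) * (Nat.choose m (i - 1) : ℝ) * β ^ i := by
  obtain ⟨n, rfl⟩ : ∃ n, m = n + 1 := ⟨m - 1, by omega⟩
  set s := Real.sqrt β with hsdef
  have hs : 0 < s := Real.sqrt_pos.mpr hβ
  have hs2 : s^2 = β := Real.sq_sqrt hβ.le
  have h0 : ∀ᵐ (x:ℝ), x ≠ 0 := by
    have hv : MeasureTheory.volume ({(0:ℝ)}:Set ℝ) = 0 := Real.volume_singleton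
    rw [MeasureTheory.ae_iff]
    convert hv using 2
    ext x; simp
  have step0 : (∫ x in ((1 - s) ^ 2)..((1 + s) ^ 2),
        x ^ (n+1) * (Real.sqrt (4 * β - (x - 1 - β) ^ 2) / (2 * Real.pi * x)))
      = (1/(2*Real.pi)) * ∫ x in ((1 - s) ^ 2)..((1 + s) ^ 2),
          x ^ n * Real.sqrt (4 * s^2 - (x - 1 - s^2) ^ 2) := by
    rw [← intervalIntegral.integral_const_mul]
    apply intervalIntegral.integral_congr_ae
    filter_upwards [h0] with x hx _
    rw [hs2]
    field_simp
    ring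
  rw [step0, subst_lemma n s hs]
  have pullc : (∫ θ in (0:ℝ)..Real.pi, (1+s^2+2*s*Real.cos θ)^n * (4*s^2*(Real.sin θ)^2))
      = 4*s^2 * ∫ θ in (0:ℝ)..Real.pi, (1+s^2+2*s*Real.cos θ)^n * (Real.sin θ)^2 := by
    rw [← intervalIntegral.integral_const_mul]
    exact intervalIntegral.integral_congr fun θ _ => by ring
  rw [pullc]
  have hhalf : (∫ θ in (0:ℝ)..Real.pi, (1+s^2+2*s*Real.cos θ)^n * (Real.sin θ)^2)
      = (1/2) * ((∫ θ in (0:ℝ)..(2*Real.pi), (1+s^2+2*s*Real.cos θ)^n * (Real.sin θ)^2)) := by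
    rw [symm_lemma n s]; ring
  rw [hhalf, wallis n s, hs2]
  have := sum_transform n β
  push_cast at this ⊢
  rw [show (1/(2*Real.pi)) * (4*β * ((1/2) * (Real.pi * (∑ k ∈ range (n+1), (n.choose k:ℝ)^2 * β^k)
      - Real.pi * (∑ k ∈ range (n+1), ((n.choose k:ℝ) * (n.choose (k+2):ℝ)) * (β^(k+1))))))
      = β * ((∑ k ∈ range (n+1), (n.choose k:ℝ)^2 * β^k)
       - (∑ k ∈ range (n+1), ((n.choose k:ℝ)*(n.choose (k+2):ℝ)) * β^(k+1))) from by
    field_simp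
    ring]
  linarith [this]
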